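/- arXiv:1101.1649 — 2 statements merged into one kernel-verified Lean document; each statement's English description precedes it below -/
import Mathlib

section
/- Under the reflection setup, if Ω_λ has positive Lebesgue measure and N < α, then the Riesz potential u(x) = ∫_Ω |x−y|^(α−N) dy satisfies u(x_λ) < u(x) for every x ∈ Σ_λ with x₁ < λ. -/
open MeasureTheory

/-- Reflection of `x` across the hyperplane `{z : z 0 = l}`. -/
noncomputable def reflH {N : ℕ} [NeZero N] (l : ℝ) (x : EuclideanSpace ℝ (Fin N)) :
    EuclideanSpace ℝ (Fin N) :=
  WithLp.toLp 2 (Function.update x 0 (2 * l - x 0))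

/-- `Σ_λ = {x ∈ Ω : x₁ < λ}`. -/
def sigmaL {N : ℕ} [NeZero N] (Ω : Set (EuclideanSpace ℝ (Fin N))) (l : ℝ) :
    Set (EuclideanSpace ℝ (Fin N)) :=
  {x ∈ Ω | x 0 < l}

/-- `Ω_λ = Ω \ closure (Σ_λ ∪ Σ'_λ)`. -/
noncomputable def omegaL {N : ℕ} [NeZero N] (Ω : Set (EuclideanSpace ℝ (Fin N))) (l : ℝ) :
    Set (EuclideanSpace ℝ (Fin N)) :=
  Ω \ closure (sigmaL Ω l ∪ reflH l '' sigmaL Ω l)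

namespace RieszAux

variable {N : ℕ} [NeZero N]

lemma reflH_apply (l : ℝ) (x : EuclideanSpace ℝ (Fin N)) (i : Fin N) :
    reflH l x i = if i = 0 then 2 * l - x 0 else x i := by
  simp [reflH, Function.update_apply]

/-- The linear isometry negating the first coordinate. -/
noncomputable def negFirst : EuclideanSpace ℝ (Fin N) ≃ₗᵢ[ℝ] EuclideanSpace ℝ (Fin N) :=
  LinearIsometryEquiv.piLpCongrRight 2
    (fun i => if i = 0 then LinearIsometryEquiv.neg ℝ else LinearIsometryEquiv.refl ℝ ℝ)

lemma negFirst_apply (x : EuclideanSpace ℝ (Fin N)) (i : Fin N) :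
    negFirst x i = if i = 0 then -(x i) else x i := by
  have : negFirst x i =
      (if i = 0 then LinearIsometryEquiv.neg ℝ else LinearIsometryEquiv.refl ℝ ℝ) (x i) := by
    simp [negFirst, LinearIsometryEquiv.piLpCongrRight_apply]
  rw [this]
  split <;> simp

lemma reflH_eq (l : ℝ) (x : EuclideanSpace ℝ (Fin N)) :
    reflH l x = EuclideanSpace.single (0 : Fin N) (2 * l) + negFirst x := by
  ext i
  rw [PiLp.add_apply, reflH_apply, negFirst_apply, EuclideanSpace.single_apply]
  by_cases h : i = 0
  · subst h; simp; ring
  · simp [h]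

lemma reflH_continuous (l : ℝ) : Continuous (reflH (N := N) l) := by
  have : reflH (N := N) l =
      fun x => EuclideanSpace.single (0 : Fin N) (2 * l) + negFirst x :=
    funext fun x => reflH_eq l x
  rw [this]
  exact continuous_const.add negFirst.continuous

lemma reflH_involutive (l : ℝ) : Function.Involutive (reflH (N := N) l) := by
  intro x
  ext i
  by_cases h : i = 0
  · subst h
    rw [reflH_apply, if_pos rfl, reflH_apply, if_pos rfl]
    ring
  · rw [reflH_apply, if_neg h, reflH_apply, if_neg h]

lemma reflH_measurePreserving (l : ℝ) :
    MeasurePreserving (reflH (N := N) l) volume volume := by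
  have : reflH (N := N) l =
      (fun y => EuclideanSpace.single (0 : Fin N) (2 * l) + y) ∘ negFirst :=
    funext fun x => reflH_eq l x
  rw [this]
  exact (measurePreserving_add_left volume _).comp negFirst.measurePreserving

/-- `reflH l` as a homeomorphism. -/
noncomputable def reflHomeo (l : ℝ) :
    EuclideanSpace ℝ (Fin N) ≃ₜ EuclideanSpace ℝ (Fin N) where
  toEquiv := (reflH_involutive (N := N) l).toPerm _
  continuous_toFun := reflH_continuous l
  continuous_invFun := reflH_continuous l

lemma reflH_measurableEmbedding (l : ℝ) :
    MeasurableEmbedding (reflH (N := N) l) :=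
  (reflHomeo (N := N) l).measurableEmbedding

lemma reflH_norm_sub (l : ℝ) (x y : EuclideanSpace ℝ (Fin N)) :
    ‖reflH l x - reflH l y‖ = ‖x - y‖ := by
  rw [reflH_eq l x, reflH_eq l y, add_sub_add_left_eq_sub, ← LinearIsometryEquiv.map_sub]
  exact negFirst.norm_map _

lemma norm_euclidean (z : EuclideanSpace ℝ (Fin N)) :
    ‖z‖ = Real.sqrt (∑ i, (z i) ^ 2) := by
  rw [EuclideanSpace.norm_eq]
  congr 1
  refine Finset.sum_congr rfl fun i _ => ?_
  rw [Real.norm_eq_abs, sq_abs]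

lemma sum_sq_sub (l : ℝ) (x y : EuclideanSpace ℝ (Fin N)) :
    (∑ i, ((x - y) i) ^ 2) - (∑ i, ((reflH l x - y) i) ^ 2)
      = 4 * (l - x 0) * (y 0 - l) := by
  have h0 : (0 : Fin N) ∈ Finset.univ := Finset.mem_univ _
  rw [← Finset.add_sum_erase _ _ h0, ← Finset.add_sum_erase _ (fun i => ((reflH l x - y) i) ^ 2) h0]
  have htail : ∀ i ∈ Finset.univ.erase (0 : Fin N),
      ((reflH l x - y) i) ^ 2 = ((x - y) i) ^ 2 := by
    intro i hi
    rw [PiLp.sub_apply, PiLp.sub_apply, reflH_apply, if_neg (Finset.ne_of_mem_erase hi)]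
  rw [Finset.sum_congr rfl htail]
  rw [PiLp.sub_apply, PiLp.sub_apply, reflH_apply, if_pos rfl]
  ring

lemma norm_reflH_sub_le (l : ℝ) {x y : EuclideanSpace ℝ (Fin N)}
    (hx : x 0 < l) (hy : l ≤ y 0) : ‖reflH l x - y‖ ≤ ‖x - y‖ := by
  rw [norm_euclidean, norm_euclidean]
  apply Real.sqrt_le_sqrt
  have := sum_sq_sub l x y
  nlinarith [mul_nonneg (mul_nonneg (by norm_num : (0:ℝ) ≤ 4) (by linarith : 0 ≤ l - x 0))
    (by linarith : 0 ≤ y 0 - l)]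

lemma norm_reflH_sub_lt (l : ℝ) {x y : EuclideanSpace ℝ (Fin N)}
    (hx : x 0 < l) (hy : l < y 0) : ‖reflH l x - y‖ < ‖x - y‖ := by
  rw [norm_euclidean, norm_euclidean]
  apply Real.sqrt_lt_sqrt (Finset.sum_nonneg fun i _ => sq_nonneg _)
  have := sum_sq_sub l x y
  nlinarith [mul_pos (mul_pos (by norm_num : (0:ℝ) < 4) (by linarith : 0 < l - x 0))
    (by linarith : 0 < y 0 - l)]

end RieszAux

open RieszAux in
/-- If `Ω_λ` has positive Lebesgue measure and `N < α`, the Riesz potential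
`u(x) = ∫_Ω |x−y|^(α−N) dy` satisfies `u(x_λ) < u(x)` for `x ∈ Σ_λ`. -/
theorem riesz_potential_reflection_lt {N : ℕ} [NeZero N]
    (Ω : Set (EuclideanSpace ℝ (Fin N))) (hΩo : IsOpen Ω) (hΩb : Bornology.IsBounded Ω)
    (l : ℝ) (hrefl : reflH l '' sigmaL Ω l ⊆ Ω)
    (hpos : 0 < volume (omegaL Ω l)) (α : ℝ) (hα : (N : ℝ) < α) :
    ∀ x ∈ Ω, x 0 < l →
      (∫ y in Ω, ‖reflH l x - y‖ ^ (α - N)) < ∫ y in Ω, ‖x - y‖ ^ (α - N) := by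
  intro x hxΩ hxl
  set p : ℝ := α - N with hp
  have hp0 : 0 < p := by simp [hp]; linarith
  -- basic sets
  set S1 : Set (EuclideanSpace ℝ (Fin N)) := sigmaL Ω l with hS1
  set S2 : Set (EuclideanSpace ℝ (Fin N)) := reflH l '' sigmaL Ω l with hS2
  set T : Set (EuclideanSpace ℝ (Fin N)) := S1 ∪ S2 with hT
  have hproj : Continuous fun z : EuclideanSpace ℝ (Fin N) => z 0 := by
    have := (EuclideanSpace.proj (0 : Fin N) : EuclideanSpace ℝ (Fin N) →L[ℝ] ℝ).continuous
    simpa [EuclideanSpace.proj] using this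
  have hS1o : IsOpen S1 := by
    have : S1 = Ω ∩ (fun z : EuclideanSpace ℝ (Fin N) => z 0) ⁻¹' Set.Iio l := by
      ext z; simp only [hS1, sigmaL, Set.mem_setOf_eq, Set.mem_inter_iff, Set.mem_preimage,
        Set.mem_Iio]
    rw [this]
    exact hΩo.inter (isOpen_Iio.preimage hproj)
  have hS2o : IsOpen S2 := (reflHomeo (N := N) l).isOpenMap _ hS1o
  have hTo : IsOpen T := hS1o.union hS2o
  have hTΩ : T ⊆ Ω := Set.union_subset (fun z hz => hz.1) hrefl
  have hTm : MeasurableSet T := hTo.measurableSet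
  have hΩm : MeasurableSet Ω := hΩo.measurableSet
  -- reflection maps T to itself
  have hreflT : reflH l ⁻¹' T = T := by
    have hmapsto : ∀ z ∈ T, reflH l z ∈ T := by
      intro z hz
      rcases hz with hz | hz
      · exact Or.inr ⟨z, hz, rfl⟩
      · rcases hz with ⟨w, hw, rfl⟩
        rw [reflH_involutive l w]
        exact Or.inl hw
    ext z
    constructor
    · intro hz
      have := hmapsto _ hz
      rwa [reflH_involutive l z] at this
    · exact fun hz => hmapsto z hz
  -- coordinates on the pieces
  have hΩT_coord : ∀ y ∈ Ω \ T, l ≤ y 0 := by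
    intro y hy
    by_contra h
    exact hy.2 (Or.inl ⟨hy.1, lt_of_not_ge h⟩)
  have homega_coord : ∀ y ∈ omegaL Ω l, l < y 0 := by
    intro y hy
    rcases hy with ⟨hyΩ, hyc⟩
    rcases lt_trichotomy (y 0) l with h | h | h
    · exact absurd (subset_closure (Set.mem_union_left _ (show y ∈ sigmaL Ω l from ⟨hyΩ, h⟩))) hyc
    · exfalso
      apply hyc
      -- y is in the closure of S1
      have : y ∈ closure S1 := by
        rw [Metric.mem_closure_iff]
        intro ε hε
        rcases Metric.isOpen_iff.1 hΩo y hyΩ with ⟨r, hr, hball⟩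
        set t : ℝ := min (ε / 2) (r / 2) with ht
        have ht0 : 0 < t := lt_min (by linarith) (by linarith)
        set w : EuclideanSpace ℝ (Fin N) := y - t • EuclideanSpace.single (0 : Fin N) (1 : ℝ)
          with hw
        have hwy : y - w = t • EuclideanSpace.single (0 : Fin N) (1 : ℝ) := by rw [hw]; abel
        have hnorm : ‖y - w‖ = t := by
          rw [hwy, norm_smul, EuclideanSpace.norm_single, norm_one, Real.norm_eq_abs,
            abs_of_pos ht0, mul_one]
        refine ⟨w, ?_, ?_⟩
        · have hwΩ : w ∈ Ω := by
            apply hball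
            rw [Metric.mem_ball, dist_eq_norm, ← norm_neg, neg_sub, hnorm]
            calc t ≤ r / 2 := min_le_right _ _
              _ < r := by linarith
          have hwc : w 0 < l := by
            rw [hw, PiLp.sub_apply, PiLp.smul_apply, EuclideanSpace.single_apply, if_pos rfl]
            simp only [smul_eq_mul, mul_one]
            linarith
          exact ⟨hwΩ, hwc⟩
        · rw [dist_eq_norm, hnorm]
          calc t ≤ ε / 2 := min_le_left _ _
            _ < ε := by linarith
      exact closure_mono Set.subset_union_left this
    · exact h
  have homega_sub : omegaL Ω l ⊆ Ω \ T :=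
    Set.diff_subset_diff_right subset_closure
  -- the two integrands
  set f : EuclideanSpace ℝ (Fin N) → ℝ := fun y => ‖x - y‖ ^ p with hf
  set g : EuclideanSpace ℝ (Fin N) → ℝ := fun y => ‖reflH l x - y‖ ^ p with hg
  have hfc : Continuous f :=
    Continuous.rpow_const (continuous_const.sub continuous_id).norm fun _ => Or.inr hp0.le
  have hgc : Continuous g :=
    Continuous.rpow_const (continuous_const.sub continuous_id).norm fun _ => Or.inr hp0.le
  have hint : ∀ (h : EuclideanSpace ℝ (Fin N) → ℝ), Continuous h →
      IntegrableOn h Ω volume := by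
    intro h hc
    exact (hc.continuousOn.integrableOn_compact hΩb.isCompact_closure).mono_set subset_closure
  have hfi : IntegrableOn f Ω volume := hint f hfc
  have hgi : IntegrableOn g Ω volume := hint g hgc
  -- g = f ∘ reflH l
  have hgf : ∀ y, g y = f (reflH l y) := by
    intro y
    simp only [hg, hf]
    have hn : ‖reflH l x - y‖ = ‖x - reflH l y‖ := by
      calc ‖reflH l x - y‖ = ‖reflH l (reflH l x) - reflH l y‖ := (reflH_norm_sub l _ _).symm
        _ = ‖x - reflH l y‖ := by rw [reflH_involutive l x]
    rw [hn]
  -- ∫_T f = ∫_T g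
  have hTint : ∫ y in T, f y = ∫ y in T, g y := by
    have := (reflH_measurePreserving (N := N) l).setIntegral_preimage_emb
      (reflH_measurableEmbedding l) f T
    rw [hreflT] at this
    rw [← this]
    exact setIntegral_congr_fun hTm fun y _ => (hgf y).symm
  -- split Ω
  have hsplit : ∀ (h : EuclideanSpace ℝ (Fin N) → ℝ), IntegrableOn h Ω volume →
      ∫ y in Ω, h y = (∫ y in T, h y) + ∫ y in Ω \ T, h y := by
    intro h hi
    rw [← setIntegral_union Set.disjoint_sdiff_right (hΩm.diff hTm)
      (hi.mono_set hTΩ) (hi.mono_set Set.diff_subset), Set.union_diff_cancel hTΩ]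
  rw [hsplit f hfi, hsplit g hgi, hTint]
  apply add_lt_add_right
  -- on Ω \ T : g ≤ f pointwise, and strict on omegaL
  have hle : ∀ y ∈ Ω \ T, g y ≤ f y := fun y hy =>
    Real.rpow_le_rpow (norm_nonneg _) (norm_reflH_sub_le l hxl (hΩT_coord y hy)) hp0.le
  have hlt : ∀ y ∈ omegaL Ω l, g y < f y := fun y hy =>
    Real.rpow_lt_rpow (norm_nonneg _) (norm_reflH_sub_lt l hxl (homega_coord y hy)) hp0
  have hDm : MeasurableSet (Ω \ T) := hΩm.diff hTm
  have hdiffi : IntegrableOn (fun y => f y - g y) (Ω \ T) volume :=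
    ((hfi.mono_set Set.diff_subset).sub (hgi.mono_set Set.diff_subset))
  have hpos' : 0 < ∫ y in Ω \ T, (f y - g y) := by
    rw [setIntegral_pos_iff_support_of_nonneg_ae]
    · apply lt_of_lt_of_le hpos
      apply measure_mono
      intro y hy
      exact ⟨ne_of_gt (sub_pos.2 (hlt y hy)), homega_sub hy⟩
    · filter_upwards [ae_restrict_mem hDm] with y hy
      exact sub_nonneg.2 (hle y hy)
    · exact hdiffi
  have hsub : 0 < (∫ y in Ω \ T, f y) - ∫ y in Ω \ T, g y := by
    rw [← integral_sub (hfi.mono_set Set.diff_subset) (hgi.mono_set Set.diff_subset)]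
    exact hpos'
  linarith
end

section
/- Under the reflection setup, if Ω_λ has positive Lebesgue measure and N = α, then the logarithmic potential u(x) = ∫_Ω log(1/|x−y|) dy satisfies u(x_λ) > u(x) for every x ∈ Σ_λ with x₁ < λ. -/
open MeasureTheory

open Metric Set Filter
open scoped ENNReal

set_option linter.unusedSectionVars false

section auxLemmas
variable {N : ℕ} [NeZero N]

lemma reflH_apply_zero (l : ℝ) (x : EuclideanSpace ℝ (Fin N)) :
    reflH l x 0 = 2 * l - x 0 := by simp [reflH]

lemma reflH_apply_ne (l : ℝ) (x : EuclideanSpace ℝ (Fin N)) {i : Fin N} (h : i ≠ 0) :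
    reflH l x i = x i := by simp [reflH, Function.update_of_ne h]

lemma reflH_involutive (l : ℝ) : Function.Involutive (reflH (N := N) l) := by
  intro x
  ext i
  by_cases h : i = 0
  · subst h; rw [reflH_apply_zero, reflH_apply_zero]; ring
  · rw [reflH_apply_ne _ _ h, reflH_apply_ne _ _ h]

lemma norm_sq_eq' (z : EuclideanSpace ℝ (Fin N)) : ‖z‖ ^ 2 = ∑ i, (z i) ^ 2 := by
  rw [EuclideanSpace.norm_eq, Real.sq_sqrt (by positivity)]
  simp [Real.norm_eq_abs, sq_abs]

lemma reflH_norm_sub_sq (l : ℝ) (x y : EuclideanSpace ℝ (Fin N)) :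
    ‖reflH l x - y‖ ^ 2 = ‖x - y‖ ^ 2 - 4 * (l - x 0) * (y 0 - l) := by
  rw [norm_sq_eq', norm_sq_eq']
  rw [Fintype.sum_eq_add_sum_compl 0, Fintype.sum_eq_add_sum_compl 0 (fun i => ((x - y) i) ^ 2)]
  have htail : ∑ i ∈ ({0}ᶜ : Finset (Fin N)), ((reflH l x - y) i) ^ 2
      = ∑ i ∈ ({0}ᶜ : Finset (Fin N)), ((x - y) i) ^ 2 := by
    refine Finset.sum_congr rfl fun i hi => ?_
    have hi' : i ≠ 0 := by simpa using hi
    simp [PiLp.sub_apply, reflH_apply_ne _ _ hi']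
  rw [htail]
  have h0 : (reflH l x - y) 0 = 2 * l - x 0 - y 0 := by
    simp [PiLp.sub_apply, reflH_apply_zero]
  have h0' : (x - y) 0 = x 0 - y 0 := by simp [PiLp.sub_apply]
  rw [h0, h0']
  ring

lemma reflH_norm_sub (l : ℝ) (x y : EuclideanSpace ℝ (Fin N)) :
    ‖reflH l x - reflH l y‖ = ‖x - y‖ := by
  have h : ‖reflH l x - reflH l y‖ ^ 2 = ‖x - y‖ ^ 2 := by
    rw [norm_sq_eq', norm_sq_eq']
    refine Finset.sum_congr rfl fun i _ => ?_
    by_cases hi : i = 0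
    · subst hi; simp [PiLp.sub_apply, reflH_apply_zero]; ring
    · simp [PiLp.sub_apply, reflH_apply_ne _ _ hi]
  have := congrArg Real.sqrt h
  rwa [Real.sqrt_sq (norm_nonneg _), Real.sqrt_sq (norm_nonneg _)] at this


lemma reflH_measurePreserving (l : ℝ) :
    MeasurePreserving (reflH (N := N) l)
      (volume : Measure (EuclideanSpace ℝ (Fin N))) volume := by
  have hpi : MeasurePreserving
      (fun (a : Fin N → ℝ) (i : Fin N) => (if i = 0 then (fun t => 2 * l - t) else id) (a i))
      volume volume := by
    apply volume_preserving_pi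
    intro i
    by_cases hi : i = 0
    · simpa [hi] using Measure.measurePreserving_sub_left (volume : Measure ℝ) (2 * l)
    · simpa [hi] using MeasurePreserving.id (volume : Measure ℝ)
  have e := EuclideanSpace.volume_preserving_symm_measurableEquiv_toLp (Fin N)
  have es := (EuclideanSpace.volume_preserving_symm_measurableEquiv_toLp (Fin N)).symm (MeasurableEquiv.toLp 2 (Fin N → ℝ)).symm
  have comp := es.comp (hpi.comp e)
  have hfeq : reflH (N := N) l = ⇑(MeasurableEquiv.toLp 2 (Fin N → ℝ)).symm.symm ∘
      (fun (a : Fin N → ℝ) (i : Fin N) => (if i = 0 then (fun t => 2 * l - t) else id) (a i)) ∘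
        ⇑(MeasurableEquiv.toLp 2 (Fin N → ℝ)).symm := by
    funext x
    ext i
    by_cases hi : i = 0
    · subst hi
      simp [reflH, Function.update_self]
    · simp [reflH, Function.update_of_ne hi, hi]
  rw [hfeq]
  exact comp

lemma integrableOn_norm_rpow_neg_half (R : ℝ) :
    IntegrableOn (fun y : EuclideanSpace ℝ (Fin N) => ‖y‖ ^ (-(2⁻¹ : ℝ)))
      (closedBall 0 R) volume := by
  have hnn : ∀ y : EuclideanSpace ℝ (Fin N), 0 ≤ ‖y‖ ^ (-(2⁻¹ : ℝ)) :=
    fun y => Real.rpow_nonneg (norm_nonneg y) _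
  have hmeas : Measurable fun y : EuclideanSpace ℝ (Fin N) => ‖y‖ ^ (-(2⁻¹ : ℝ)) := by
    fun_prop
  constructor
  · exact hmeas.aestronglyMeasurable
  · rw [hasFiniteIntegral_iff_ofReal (Filter.Eventually.of_forall hnn)]
    set μ' := volume.restrict (closedBall (0 : EuclideanSpace ℝ (Fin N)) R) with hμ'
    rw [lintegral_eq_lintegral_meas_le μ' (Filter.Eventually.of_forall hnn) hmeas.aemeasurable]
    set f := fun t : ℝ => μ' {a : EuclideanSpace ℝ (Fin N) | t ≤ ‖a‖ ^ (-(2⁻¹ : ℝ))} with hf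
    have hn1 : 1 ≤ N := Nat.pos_of_ne_zero (NeZero.ne N)
    have hCB : μ' Set.univ = volume (closedBall (0 : EuclideanSpace ℝ (Fin N)) R) := by
      simp [hμ']
    calc
      ∫⁻ t in Ioi (0:ℝ), f t ≤ ∫⁻ t in Ioc (0:ℝ) 1 ∪ Ioi 1, f t :=
        lintegral_mono_set Ioi_subset_Ioc_union_Ioi
      _ ≤ (∫⁻ t in Ioc (0:ℝ) 1, f t) + ∫⁻ t in Ioi (1:ℝ), f t := lintegral_union_le _ _ _
      _ < ∞ := by
        refine ENNReal.add_lt_top.2 ⟨?_, ?_⟩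
        · calc
            ∫⁻ t in Ioc (0:ℝ) 1, f t
                ≤ ∫⁻ _ in Ioc (0:ℝ) 1, volume (closedBall (0 : EuclideanSpace ℝ (Fin N)) R) := by
              refine lintegral_mono fun t => ?_
              rw [← hCB]
              exact measure_mono (subset_univ _)
            _ = volume (closedBall (0 : EuclideanSpace ℝ (Fin N)) R) * volume (Ioc (0:ℝ) 1) :=
              setLIntegral_const _ _
            _ < ∞ := by
              apply ENNReal.mul_lt_top measure_closedBall_lt_top
              simp [Real.volume_Ioc]
        · have hsub : ∀ t ∈ Ioi (1:ℝ),
              f t ≤ volume (closedBall (0 : EuclideanSpace ℝ (Fin N)) (t ^ (-(2:ℝ)))) := by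
            intro t ht
            have ht1 : (1:ℝ) < t := ht
            have ht0 : (0:ℝ) < t := lt_trans one_pos ht1
            refine le_trans (Measure.restrict_le_self _) (measure_mono fun a ha => ?_)
            simp only [mem_setOf_eq] at ha
            have hapos : 0 < ‖a‖ := by
              rcases eq_or_lt_of_le (norm_nonneg a) with h | h
              · exfalso
                rw [← h, Real.zero_rpow (by norm_num)] at ha
                linarith
              · exact h
            have key : (‖a‖ ^ (-(2⁻¹:ℝ))) ^ (-(2:ℝ)) ≤ t ^ (-(2:ℝ)) :=
              Real.rpow_le_rpow_of_nonpos ht0 ha (by norm_num)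
            rw [mem_closedBall_zero_iff]
            calc ‖a‖ = (‖a‖ ^ (-(2⁻¹:ℝ))) ^ (-(2:ℝ)) := by
                  rw [← Real.rpow_mul (norm_nonneg a)]; norm_num
              _ ≤ t ^ (-(2:ℝ)) := Real.rpow_le_rpow_of_nonpos ht0 ha (by norm_num)
          calc
            ∫⁻ t in Ioi (1:ℝ), f t
                ≤ ∫⁻ t in Ioi (1:ℝ),
                    volume (closedBall (0 : EuclideanSpace ℝ (Fin N)) (t ^ (-(2:ℝ)))) :=
              setLIntegral_mono' measurableSet_Ioi hsub
            _ ≤ ∫⁻ t in Ioi (1:ℝ), ENNReal.ofReal (t ^ (-(2:ℝ))) *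
                  volume (ball (0 : EuclideanSpace ℝ (Fin N)) 1) := by
              refine setLIntegral_mono' measurableSet_Ioi fun t ht => ?_
              have ht1 : (1:ℝ) < t := ht
              have ht0 : (0:ℝ) < t := lt_trans one_pos ht1
              rw [Measure.addHaar_closedBall _ _ (Real.rpow_nonneg ht0.le _)]
              gcongr
              have heq : (t ^ (-(2:ℝ))) ^ (Module.finrank ℝ (EuclideanSpace ℝ (Fin N)))
                  = t ^ ((-(2:ℝ)) * (Module.finrank ℝ (EuclideanSpace ℝ (Fin N)) : ℝ)) := by
                rw [Real.rpow_mul ht0.le, Real.rpow_natCast]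
              rw [heq]
              apply Real.rpow_le_rpow_of_exponent_le ht1.le
              have : 1 ≤ (Module.finrank ℝ (EuclideanSpace ℝ (Fin N)) : ℝ) := by
                rw [finrank_euclideanSpace_fin]
                exact_mod_cast hn1
              nlinarith
            _ = (∫⁻ t in Ioi (1:ℝ), ENNReal.ofReal (t ^ (-(2:ℝ)))) *
                  volume (ball (0 : EuclideanSpace ℝ (Fin N)) 1) :=
              lintegral_mul_const' _ _ measure_ball_lt_top.ne
            _ < ∞ := by
              apply ENNReal.mul_lt_top _ measure_ball_lt_top
              exact (integrableOn_Ioi_rpow_of_lt (by norm_num) one_pos).setLIntegral_lt_top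

lemma abs_log_le_aux {t : ℝ} (ht : 0 ≤ t) :
    |Real.log t| ≤ 2 * t ^ (-(2⁻¹ : ℝ)) + t := by
  rcases eq_or_lt_of_le ht with h | h
  · rw [← h]
    simp [Real.log_zero, Real.zero_rpow (by norm_num : (-(2⁻¹:ℝ)) ≠ 0)]
  rcases le_or_gt t 1 with h1 | h1
  · rw [abs_of_nonpos (Real.log_nonpos ht h1)]
    have hlr : Real.log (t ^ (-(2⁻¹:ℝ))) = (-(2⁻¹:ℝ)) * Real.log t := Real.log_rpow h _
    have hle : Real.log (t ^ (-(2⁻¹:ℝ))) ≤ t ^ (-(2⁻¹:ℝ)) - 1 :=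
      Real.log_le_sub_one_of_pos (Real.rpow_pos_of_pos h _)
    nlinarith [Real.rpow_pos_of_pos h (-(2⁻¹:ℝ))]
  · rw [abs_of_nonneg (Real.log_nonneg h1.le)]
    have hle : Real.log t ≤ t - 1 := Real.log_le_sub_one_of_pos h
    have : 0 ≤ t ^ (-(2⁻¹:ℝ)) := Real.rpow_nonneg ht _
    nlinarith

lemma integrableOn_log_norm (R : ℝ) :
    IntegrableOn (fun y : EuclideanSpace ℝ (Fin N) => Real.log ‖y‖) (closedBall 0 R) volume := by
  have hB : IntegrableOn (fun y : EuclideanSpace ℝ (Fin N) => ‖y‖ ^ (-(2⁻¹ : ℝ)))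
      (closedBall 0 R) volume := integrableOn_norm_rpow_neg_half R
  have hg : IntegrableOn (fun y : EuclideanSpace ℝ (Fin N) => 2 * ‖y‖ ^ (-(2⁻¹:ℝ)) + ‖y‖)
      (closedBall 0 R) volume := by
    refine (hB.const_mul 2).add ?_
    exact continuous_norm.continuousOn.integrableOn_compact (isCompact_closedBall _ _)
  refine Integrable.mono' hg ?_ (ae_of_all _ fun y => ?_)
  · exact ((Real.measurable_log.comp measurable_norm).aestronglyMeasurable)
  · rw [Real.norm_eq_abs]
    exact abs_log_le_aux (norm_nonneg y)

lemma integrableOn_log_kernel {Ω : Set (EuclideanSpace ℝ (Fin N))}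
    (hΩb : Bornology.IsBounded Ω) (x : EuclideanSpace ℝ (Fin N)) :
    IntegrableOn (fun y : EuclideanSpace ℝ (Fin N) => Real.log (1 / ‖x - y‖)) Ω volume := by
  obtain ⟨R, hR⟩ := hΩb.subset_closedBall x
  have hmp : MeasurePreserving (fun y : EuclideanSpace ℝ (Fin N) => x - y)
      (volume : Measure (EuclideanSpace ℝ (Fin N))) volume :=
    Measure.measurePreserving_sub_left volume x
  have hemb : MeasurableEmbedding (fun y : EuclideanSpace ℝ (Fin N) => x - y) :=
    (MeasurableEquiv.subLeft x).measurableEmbedding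
  have hpre : (fun y : EuclideanSpace ℝ (Fin N) => x - y) ⁻¹' (closedBall 0 R)
      = closedBall x R := by
    ext y
    simp [mem_closedBall, dist_eq_norm, norm_sub_rev x y, dist_comm]
  have hcb : IntegrableOn (fun y : EuclideanSpace ℝ (Fin N) => Real.log ‖x - y‖)
      (closedBall x R) volume := by
    have := (hmp.integrableOn_comp_preimage hemb
      (s := closedBall (0 : EuclideanSpace ℝ (Fin N)) R)
      (f := fun y : EuclideanSpace ℝ (Fin N) => Real.log ‖y‖)).2 (integrableOn_log_norm R)
    rwa [hpre] at this
  have : IntegrableOn (fun y : EuclideanSpace ℝ (Fin N) => Real.log ‖x - y‖) Ω volume :=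
    hcb.mono_set hR
  have hneg := this.neg
  apply hneg.congr
  filter_upwards with y
  rw [one_div, Real.log_inv]
  rfl

/-- reflH as a measurable equiv -/
noncomputable def reflHME (l : ℝ) :
    EuclideanSpace ℝ (Fin N) ≃ᵐ EuclideanSpace ℝ (Fin N) where
  toEquiv := Function.Involutive.toPerm _ (reflH_involutive (N := N) l)
  measurable_toFun := (reflH_measurePreserving l).measurable
  measurable_invFun := (reflH_measurePreserving l).measurable

lemma reflHME_coe (l : ℝ) : ⇑(reflHME (N := N) l) = reflH l := rfl

lemma reflH_lt_norm {l : ℝ} {x y : EuclideanSpace ℝ (Fin N)}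
    (hx : x 0 < l) (hy : l < y 0) : ‖reflH l x - y‖ < ‖x - y‖ := by
  have h := reflH_norm_sub_sq l x y
  have h4 : 0 < 4 * (l - x 0) * (y 0 - l) := by nlinarith
  have hsq : ‖reflH l x - y‖ ^ 2 < ‖x - y‖ ^ 2 := by nlinarith
  nlinarith [norm_nonneg (reflH l x - y), norm_nonneg (x - y)]

lemma reflH_le_norm {l : ℝ} {x y : EuclideanSpace ℝ (Fin N)}
    (hx : x 0 < l) (hy : l ≤ y 0) : ‖reflH l x - y‖ ≤ ‖x - y‖ := by
  have h := reflH_norm_sub_sq l x y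
  have h4 : 0 ≤ 4 * (l - x 0) * (y 0 - l) := by nlinarith
  have hsq : ‖reflH l x - y‖ ^ 2 ≤ ‖x - y‖ ^ 2 := by nlinarith
  nlinarith [norm_nonneg (reflH l x - y), norm_nonneg (x - y)]

/-- If `Ω_λ` has positive Lebesgue measure, the logarithmic potential
`u(x) = ∫_Ω log(1/|x−y|) dy` (case `N = α`) satisfies `u(x_λ) > u(x)` for `x ∈ Σ_λ`. -/
theorem log_potential_reflection_gt {N : ℕ} [NeZero N]
    (Ω : Set (EuclideanSpace ℝ (Fin N))) (hΩo : IsOpen Ω) (hΩb : Bornology.IsBounded Ω)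
    (l : ℝ) (hrefl : reflH l '' sigmaL Ω l ⊆ Ω)
    (hpos : 0 < volume (omegaL Ω l)) :
    ∀ x ∈ Ω, x 0 < l →
      (∫ y in Ω, Real.log (1 / ‖x - y‖)) < ∫ y in Ω, Real.log (1 / ‖reflH l x - y‖) := by
  intro x hxΩ hxl
  classical
  set S : Set (EuclideanSpace ℝ (Fin N)) := sigmaL Ω l ∪ reflH l '' sigmaL Ω l with hSdef
  have hxSig : x ∈ sigmaL Ω l := ⟨hxΩ, hxl⟩
  have hSsub : S ⊆ Ω := union_subset (fun y hy => hy.1) hrefl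
  -- continuity of coordinate 0 and of reflH
  have hcont0 : Continuous fun y : EuclideanSpace ℝ (Fin N) => y 0 :=
    (EuclideanSpace.proj (0 : Fin N)).continuous
  have hSigo : IsOpen (sigmaL Ω l) := by
    have : sigmaL Ω l = Ω ∩ {y | y 0 < l} := rfl
    rw [this]
    exact hΩo.inter (isOpen_lt hcont0 continuous_const)
  have hreflC : Continuous (reflH (N := N) l) := by
    apply Isometry.continuous
    intro a b
    rw [edist_dist, edist_dist, dist_eq_norm, dist_eq_norm, reflH_norm_sub]
  have himg : reflH l '' sigmaL Ω l = reflH l ⁻¹' sigmaL Ω l := by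
    ext y
    constructor
    · rintro ⟨z, hz, rfl⟩; rwa [mem_preimage, reflH_involutive l z]
    · intro h; exact ⟨reflH l y, h, reflH_involutive l y⟩
  have hSo : IsOpen S := by
    rw [hSdef, himg]
    exact hSigo.union (hSigo.preimage hreflC)
  have hSm : MeasurableSet S := hSo.measurableSet
  have hΩm : MeasurableSet Ω := hΩo.measurableSet
  -- integrabilities
  have hIx : IntegrableOn (fun y => Real.log (1 / ‖x - y‖)) Ω volume :=
    integrableOn_log_kernel hΩb x
  have hIR : IntegrableOn (fun y => Real.log (1 / ‖reflH l x - y‖)) Ω volume :=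
    integrableOn_log_kernel hΩb (reflH l x)
  -- preimage of S under reflH is S
  have hpre : reflH l ⁻¹' S = S := by
    ext y
    simp only [hSdef, preimage_union, mem_union, mem_preimage]
    constructor
    · rintro (h | h)
      · exact Or.inr ⟨reflH l y, h, reflH_involutive l y⟩
      · rcases h with ⟨z, hz, hzy⟩
        exact Or.inl ((reflH_involutive l).injective hzy ▸ hz)
    · rintro (h | h)
      · exact Or.inr ⟨y, h, rfl⟩
      · rcases h with ⟨z, hz, rfl⟩
        exact Or.inl (by rwa [reflH_involutive l z])
  -- Claim 1 : integrals over S agree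
  have claim1 : (∫ y in S, Real.log (1 / ‖x - y‖))
      = ∫ y in S, Real.log (1 / ‖reflH l x - y‖) := by
    have := (reflH_measurePreserving (N := N) l).setIntegral_preimage_emb
      (reflHME l).measurableEmbedding
      (fun y => Real.log (1 / ‖reflH l x - y‖)) S
    rw [hpre] at this
    rw [← this]
    refine setIntegral_congr_fun hSm fun y _ => ?_
    rw [reflH_norm_sub]
  -- pointwise comparisons off S
  have hxS : x ∈ S := Or.inl hxSig
  have hRxS : reflH l x ∈ S := Or.inr ⟨x, hxSig, rfl⟩
  set g : EuclideanSpace ℝ (Fin N) → ℝ :=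
    fun y => Real.log (1 / ‖reflH l x - y‖) - Real.log (1 / ‖x - y‖) with hgdef
  have key : ∀ y, y ∉ S → y ≠ x → y ≠ reflH l x → l ≤ y 0 →
      (0 ≤ g y ∧ (l < y 0 → 0 < g y)) := by
    intro y hyS hyx hyR hyl
    have h1 : 0 < ‖reflH l x - y‖ := by
      rw [norm_pos_iff, sub_ne_zero]; exact fun h => hyR h.symm
    have h2 : ‖reflH l x - y‖ ≤ ‖x - y‖ := reflH_le_norm hxl hyl
    have hg : g y = Real.log ‖x - y‖ - Real.log ‖reflH l x - y‖ := by
      rw [hgdef]; simp only [one_div, Real.log_inv]; ring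
    constructor
    · rw [hg, sub_nonneg]
      exact Real.log_le_log (by linarith) h2
    · intro hyl'
      have h2' : ‖reflH l x - y‖ < ‖x - y‖ := reflH_lt_norm hxl hyl'
      rw [hg, sub_pos]
      exact Real.log_lt_log h1 h2'
  have hyS_facts : ∀ y ∈ Ω \ S, y ≠ x ∧ y ≠ reflH l x ∧ l ≤ y 0 := by
    intro y hy
    refine ⟨fun h => hy.2 (h ▸ hxS), fun h => hy.2 (h ▸ hRxS), ?_⟩
    by_contra h
    exact hy.2 (Or.inl ⟨hy.1, not_le.mp h⟩)
  have hg_nonneg : ∀ y ∈ Ω \ S, 0 ≤ g y := by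
    intro y hy
    obtain ⟨h1, h2, h3⟩ := hyS_facts y hy
    exact (key y hy.2 h1 h2 h3).1
  -- omegaL ⊆ Ω \ S and g > 0 there
  have hωsub : omegaL Ω l ⊆ Ω \ S := diff_subset_diff_right subset_closure
  have hg_pos : ∀ y ∈ omegaL Ω l, 0 < g y := by
    intro y hy
    have hyΩS : y ∈ Ω \ S := hωsub hy
    obtain ⟨h1, h2, h3⟩ := hyS_facts y hyΩS
    refine (key y hyΩS.2 h1 h2 h3).2 ?_
    rcases eq_or_lt_of_le h3 with h | h
    · exfalso
      -- y 0 = l, y ∈ Ω open: y ∈ closure (sigmaL Ω l)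
      apply hy.2
      apply closure_mono (subset_union_left)
      rw [Metric.mem_closure_iff]
      intro ε hε
      obtain ⟨δ, hδ, hball⟩ := Metric.isOpen_iff.mp hΩo y hy.1
      set η := min ε δ / 2 with hη
      have hη0 : 0 < η := by positivity
      have hηε : η < ε := by
        have := min_le_left ε δ
        rw [hη]; linarith
      have hηδ : η < δ := by
        have := min_le_right ε δ
        rw [hη]; linarith
      set b := y - η • EuclideanSpace.single (0 : Fin N) (1 : ℝ) with hb
      have hdist : dist y b = η := by
        rw [dist_eq_norm, hb, sub_sub_cancel, norm_smul, EuclideanSpace.norm_single]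
        simp [abs_of_pos hη0]
      refine ⟨b, ⟨?_, ?_⟩, by rwa [hdist]⟩
      · apply hball
        rw [mem_ball, dist_comm, hdist]
        exact hηδ
      · have : b 0 = y 0 - η := by
          rw [hb]
          simp [PiLp.sub_apply, PiLp.smul_apply, EuclideanSpace.single_apply]
        rw [this, ← h]
        linarith
    · exact h
  have hΩSm : MeasurableSet (Ω \ S) := hΩm.diff hSm
  have hgiR : IntegrableOn (fun y => Real.log (1 / ‖reflH l x - y‖)) (Ω \ S) volume :=
    hIR.mono_set diff_subset
  have hgix : IntegrableOn (fun y => Real.log (1 / ‖x - y‖)) (Ω \ S) volume :=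
    hIx.mono_set diff_subset
  have hgi : IntegrableOn g (Ω \ S) volume := hgiR.sub hgix
  have hpos' : 0 < ∫ y in Ω \ S, g y := by
    rw [setIntegral_pos_iff_support_of_nonneg_ae ?_ hgi]
    · refine lt_of_lt_of_le hpos (measure_mono fun y hy => ?_)
      exact ⟨(hg_pos y hy).ne', hωsub hy⟩
    · filter_upwards [ae_restrict_mem hΩSm] with y hy using hg_nonneg y hy
  have hsplit : ∀ f : EuclideanSpace ℝ (Fin N) → ℝ, IntegrableOn f Ω volume →
      ∫ y in Ω, f y = (∫ y in S, f y) + ∫ y in Ω \ S, f y := by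
    intro f hf
    calc ∫ y in Ω, f y = ∫ y in S ∪ Ω \ S, f y := by rw [union_diff_cancel hSsub]
      _ = (∫ y in S, f y) + ∫ y in Ω \ S, f y :=
        setIntegral_union disjoint_sdiff_self_right hΩSm
          (hf.mono_set hSsub) (hf.mono_set diff_subset)
  have hdiff : (∫ y in Ω \ S, g y)
      = (∫ y in Ω \ S, Real.log (1 / ‖reflH l x - y‖))
        - ∫ y in Ω \ S, Real.log (1 / ‖x - y‖) := integral_sub hgiR hgix
  rw [hsplit _ hIx, hsplit _ hIR, ← claim1]
  rw [hdiff] at hpos'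
  linarith

end auxLemmas
end
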